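/- (Theorem 1, estimate.) Set h_τ := [‖u(0)‖ + ∫_0^τ (α(ξ)·ν(ξ)·‖u(ξ−τ)‖^p + β(ξ)·ν(ξ)) dξ]/ν(τ). Assume α(t) > 0 for all t ≥ τ, the improper integral I := ∫_τ^∞ α(ξ)·σ(ξ)^p·ν(ξ)^{1−p} dξ converges, and ω := sup_{t ≥ τ} (β(t)/α(t))^{1/p}·exp(−∫_0^{t−τ} γ(ξ) dξ) is finite, positive, and satisfies ω < ((p−1)·I)^{−1/(p−1)} − h_τ·ν(τ). Then for all t ≥ τ, ‖u(t)‖ ≤ (1/ν(t))·[ ( (h_τ·ν(τ) + ω)^{1−p} − (p−1)·∫_τ^t α(ξ)·σ(ξ)^p·ν(ξ)^{1−p} dξ )^{−1/(p−1)} − ω ]. -/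

import Mathlib

open Real MeasureTheory Set Filter ComplexInnerProductSpace

set_option maxHeartbeats 1000000

lemma aux_add_rpow_le {a b p : ℝ} (ha : 0 ≤ a) (hb : 0 ≤ b) (hp : 1 ≤ p) :
    a ^ p + b ^ p ≤ (a + b) ^ p := by
  have h := NNReal.add_rpow_le_rpow_add a.toNNReal b.toNNReal hp
  have := (NNReal.coe_le_coe).2 h
  simpa [NNReal.coe_rpow, Real.coe_toNNReal a ha, Real.coe_toNNReal b hb,
    Real.coe_toNNReal _ (add_nonneg ha hb)] using this

lemma aux_mvt_rpow {a d p : ℝ} (ha : 0 ≤ a) (hd : 0 ≤ d) (hp : 1 ≤ p) :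
    (a + d) ^ p ≤ a ^ p + p * (a + d) ^ (p - 1) * d := by
  rcases eq_or_lt_of_le hd with rfl | hd'
  · simp
  have hab : a < a + d := by linarith
  have hcont : ContinuousOn (fun x : ℝ => x ^ p) (Icc a (a + d)) := fun x _ =>
    (Real.continuousAt_rpow_const x p (Or.inr (by linarith))).continuousWithinAt
  have hderiv : ∀ x ∈ Ioo a (a + d), HasDerivAt (fun x : ℝ => x ^ p) (p * x ^ (p - 1)) x :=
    fun x hx => Real.hasDerivAt_rpow_const (Or.inl (by nlinarith [hx.1] : x ≠ 0))
  obtain ⟨c, hc, hceq⟩ := exists_hasDerivAt_eq_slope (fun x : ℝ => x ^ p)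
    (fun x => p * x ^ (p - 1)) hab hcont (fun x hx => hderiv x hx)
  have hcb : p * c ^ (p - 1) ≤ p * (a + d) ^ (p - 1) := by
    have : c ^ (p - 1) ≤ (a + d) ^ (p - 1) :=
      Real.rpow_le_rpow (by linarith [hc.1] : (0:ℝ) ≤ c) (le_of_lt hc.2) (by linarith)
    nlinarith [this, (by linarith : (0:ℝ) < p)]
  have hslope : (a + d) ^ p - a ^ p = p * c ^ (p - 1) * d := by
    rw [hceq, add_sub_cancel_left, div_mul_cancel₀ _ hd'.ne']
  nlinarith [hslope, hcb, hd'.le]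

/-- Comparison: the norm of the solution is dominated by the comparison function `h`. -/
lemma aux_comparison
    {H : Type*} [NormedAddCommGroup H] [InnerProductSpace ℂ H]
    (τ p : ℝ) (hτ : 0 < τ) (hp : 1 < p)
    (γ α β : ℝ → ℝ)
    (hγc : Continuous γ) (hαc : Continuous α)
    (hα : ∀ t, 0 ≤ α t)
    (u : ℝ → H) (u' : ℝ → H)
    (huc : ContinuousOn u (Ici (-τ)))
    (hud : ∀ t, 0 ≤ t → HasDerivWithinAt u (u' t) (Ici (0:ℝ)) t)
    (hnd : ∀ t, 0 ≤ t → DifferentiableWithinAt ℝ (fun s => ‖u s‖) (Ici (0:ℝ)) t)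
    (huineq : ∀ t, 0 ≤ t → (⟪u t, u' t⟫).re ≤
      γ t * ‖u t‖ ^ 2 + α t * ‖u t‖ * ‖u (t - τ)‖ ^ p + β t * ‖u t‖)
    (h h' : ℝ → ℝ)
    (hh0 : ∀ t, -τ ≤ t → 0 ≤ h t)
    (hhc : ContinuousOn h (Ici (-τ)))
    (hhd : ∀ t, 0 ≤ t → HasDerivWithinAt h (h' t) (Ici (0:ℝ)) t)
    (hheq : ∀ t, 0 ≤ t → h' t = γ t * h t + α t * h (t - τ) ^ p + β t)
    (hinit : ∀ t, -τ ≤ t → t ≤ 0 → h t = ‖u t‖) :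
    ∀ t, -τ ≤ t → ‖u t‖ ≤ h t := by
  intro t0 ht0
  rcases le_or_gt t0 0 with h0 | h0
  · exact le_of_eq (hinit t0 ht0 h0).symm
  set T := t0 with hT
  have hT0 : 0 < T := h0
  -- bounds on compact intervals
  obtain ⟨M0, hM0⟩ := isCompact_Icc.exists_bound_of_continuousOn
    (hhc.mono (Icc_subset_Ici_self : Icc (-τ) T ⊆ Ici (-τ)))
  obtain ⟨G0, hG0⟩ := isCompact_Icc.exists_bound_of_continuousOn
    (hγc.continuousOn : ContinuousOn γ (Icc 0 T))
  obtain ⟨A0, hA0⟩ := isCompact_Icc.exists_bound_of_continuousOn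
    (hαc.continuousOn : ContinuousOn α (Icc 0 T))
  set M : ℝ := max M0 0 with hM
  set Γ : ℝ := max G0 0 with hΓ
  set A : ℝ := max A0 0 with hA
  have hMh : ∀ x ∈ Icc (-τ) T, h x ≤ M := fun x hx =>
    le_trans (le_abs_self _) (le_trans (by simpa using hM0 x hx) (le_max_left _ _))
  have hΓγ : ∀ x ∈ Icc 0 T, γ x ≤ Γ := fun x hx =>
    le_trans (le_abs_self _) (le_trans (by simpa using hG0 x hx) (le_max_left _ _))
  have hAα : ∀ x ∈ Icc 0 T, α x ≤ A := fun x hx =>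
    le_trans (le_abs_self _) (le_trans (by simpa using hA0 x hx) (le_max_left _ _))
  have hMnn : 0 ≤ M := le_max_right _ _
  have hΓnn : 0 ≤ Γ := le_max_right _ _
  have hAnn : 0 ≤ A := le_max_right _ _
  have hM1 : (0:ℝ) < M + 1 := by linarith
  set Q : ℝ := p * A * (M + 1) ^ (p - 1) with hQ
  have hQnn : 0 ≤ Q := by
    have h1 : 0 ≤ (M + 1) ^ (p - 1) := Real.rpow_nonneg hM1.le _
    positivity
  set K : ℝ := Γ + Q + 1 with hK
  have hKpos : 0 < K := by linarith
  set f : ℝ → ℝ := fun s => ‖u s‖ with hf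
  set g' : ℝ → ℝ := fun s => derivWithin (fun s => ‖u s‖) (Ici (0:ℝ)) s with hg'
  -- main ε-claim
  have main : ∀ ε : ℝ, 0 < ε → ε ≤ Real.exp (-(K * T)) →
      ∀ s, -τ ≤ s → s ≤ T → f s ≤ h s + ε * Real.exp (K * s) := by
    intro ε hε hεle
    set B : ℝ → ℝ := fun s => h s + ε * Real.exp (K * s) with hB
    set B' : ℝ → ℝ := fun s => h' s + ε * (Real.exp (K * s) * K) with hB'
    have hEpos : ∀ s : ℝ, 0 < ε * Real.exp (K * s) := fun s => by positivity
    have claim : ∀ n : ℕ, ∀ s, -τ ≤ s → s ≤ min ((n:ℝ) * τ) T → f s ≤ B s := by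
      intro n
      induction n with
      | zero =>
        intro s hs1 hs2
        have hmin : min ((0:ℕ):ℝ) ((0:ℕ):ℝ) = 0 := by norm_num
        have hs0 : s ≤ 0 := by
          have h1 : ((0:ℕ):ℝ) * τ = 0 := by norm_num
          have h2 : min (((0:ℕ):ℝ) * τ) T = 0 := by rw [h1]; exact min_eq_left hT0.le
          rwa [h2] at hs2
        have hfs : f s = h s := (hinit s hs1 hs0).symm
        have := hEpos s
        simp only [hB]; linarith
      | succ n ih =>
        intro s hs1 hs2
        set a : ℝ := min ((n:ℝ) * τ) T with ha
        set b : ℝ := min (((n+1:ℕ):ℝ) * τ) T with hb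
        have hnn1 : (n:ℝ) * τ ≤ ((n+1:ℕ):ℝ) * τ :=
          mul_le_mul_of_nonneg_right (by push_cast; linarith) hτ.le
        have hab : a ≤ b := min_le_min hnn1 le_rfl
        have ha0 : 0 ≤ a := le_min (by positivity) hT0.le
        have hbT : b ≤ T := min_le_right _ _
        rcases le_or_gt s a with hsa | hsa
        · exact ih s hs1 hsa
        have hsb : s ≤ b := hs2
        -- apply the fencing lemma on [a, b]
        have hIccsub : Icc a b ⊆ Ici (-τ) := fun x hx => le_trans (by linarith) hx.1
        have hfc : ContinuousOn f (Icc a b) := (huc.norm).mono hIccsub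
        have hfd : ∀ x ∈ Ico a b, HasDerivWithinAt f (g' x) (Ici x) x := fun x hx =>
          ((hnd x (le_trans ha0 hx.1)).hasDerivWithinAt).mono (Ici_subset_Ici.2 (le_trans ha0 hx.1))
        have hfa : f a ≤ B a := ih a (le_trans (by linarith) ha0) le_rfl
        have hBc : ContinuousOn B (Icc a b) :=
          ((hhc.mono hIccsub).add
            ((continuous_const.mul (Real.continuous_exp.comp (continuous_const.mul continuous_id))).continuousOn))
        have hBd : ∀ x ∈ Ico a b, HasDerivWithinAt B (B' x) (Ici x) x := by
          intro x hx
          have hx0 : 0 ≤ x := le_trans ha0 hx.1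
          have h1 : HasDerivWithinAt h (h' x) (Ici x) x :=
            (hhd x hx0).mono (Ici_subset_Ici.2 hx0)
          have h2 : HasDerivAt (fun s => ε * Real.exp (K * s)) (ε * (Real.exp (K * x) * K)) x := by
            simpa using (((hasDerivAt_id x).const_mul K).exp).const_mul ε
          exact h1.add h2.hasDerivWithinAt
        have bound : ∀ x ∈ Ico a b, f x = B x → g' x < B' x := by
          intro x hx hfx
          have hx0 : 0 ≤ x := le_trans ha0 hx.1
          have hxT : x ≤ T := le_trans hx.2.le hbT
          have hxτ1 : -τ ≤ x - τ := by linarith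
          have hxτ2 : x - τ ≤ min ((n:ℝ) * τ) T := by
            refine le_min ?_ (by linarith)
            have hlt : x < ((n+1:ℕ):ℝ) * τ := lt_of_lt_of_le hx.2 (min_le_left _ _)
            have hexp : ((n+1:ℕ):ℝ) * τ = (n:ℝ) * τ + τ := by push_cast; ring
            linarith
          have hEposx := hEpos x
          -- f x > 0
          have hhx0 : 0 ≤ h x := hh0 x (by linarith)
          have hfxpos : 0 < f x := by rw [hfx]; simp only [hB]; linarith
          -- derivative identity: f x * g' x = re ⟪u x, u' x⟫
          have hkey : f x * g' x = (⟪u x, u' x⟫).re := by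
            have hUD : UniqueDiffWithinAt ℝ (Ici (0:ℝ)) x := uniqueDiffOn_Ici 0 x hx0
            have d1 : HasDerivWithinAt (fun s => ‖u s‖ ^ (2:ℕ))
                (((2:ℕ):ℝ) * ‖u x‖ ^ (2-1) * g' x) (Ici 0) x :=
              ((hnd x hx0).hasDerivWithinAt).pow 2
            have dinner : HasDerivWithinAt (fun s => (⟪u s, u s⟫ : ℂ))
                (⟪u x, u' x⟫ + ⟪u' x, u x⟫) (Ici 0) x :=
              (hud x hx0).inner ℂ (hud x hx0)
            have d2 : HasDerivWithinAt (fun s => ((⟪u s, u s⟫ : ℂ)).re)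
                ((⟪u x, u' x⟫ + ⟪u' x, u x⟫ : ℂ).re) (Ici 0) x :=
              (Complex.reCLM.hasFDerivAt.comp_hasDerivWithinAt x dinner)
            have hfun : (fun s => ((⟪u s, u s⟫ : ℂ)).re) = fun s => ‖u s‖ ^ (2:ℕ) := by
              funext s
              have := inner_self_eq_norm_sq (𝕜 := ℂ) (u s)
              simpa [RCLike.re_to_complex] using this
            rw [hfun] at d2
            have e1 := d1.derivWithin hUD
            have e2 := d2.derivWithin hUD
            have heq := e1.symm.trans e2
            have hre : (⟪u x, u' x⟫ + ⟪u' x, u x⟫ : ℂ).re = 2 * (⟪u x, u' x⟫).re := by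
              rw [Complex.add_re]
              have hc : (⟪u' x, u x⟫ : ℂ) = starRingEnd ℂ ⟪u x, u' x⟫ := (inner_conj_symm _ _).symm
              rw [hc, Complex.conj_re]; ring
            rw [hre] at heq
            norm_num [pow_one] at heq
            simp only [hf]
            linarith [heq]
          -- divide through by f x
          have hR : g' x ≤ γ x * f x + α x * f (x - τ) ^ p + β x := by
            have h1 := huineq x hx0
            rw [← hkey] at h1
            have h2 : f x * g' x ≤ f x * (γ x * f x + α x * f (x - τ) ^ p + β x) := by
              calc f x * g' x ≤ γ x * ‖u x‖ ^ 2 + α x * ‖u x‖ * ‖u (x - τ)‖ ^ p + β x * ‖u x‖ := h1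
              _ = f x * (γ x * f x + α x * f (x - τ) ^ p + β x) := by simp only [hf]; ring
            exact le_of_mul_le_mul_left h2 hfxpos
          set Ex : ℝ := Real.exp (K * x) with hEx
          set Exτ : ℝ := Real.exp (K * (x - τ)) with hExτ
          set a1 : ℝ := h (x - τ) with ha1
          set d1v : ℝ := ε * Exτ with hd1v
          have ha1nn : 0 ≤ a1 := hh0 _ hxτ1
          have hd1nn : 0 ≤ d1v := by positivity
          have hfτ : f (x - τ) ≤ a1 + d1v := ih (x - τ) hxτ1 hxτ2
          have hf5 : f (x - τ) ^ p ≤ (a1 + d1v) ^ p :=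
            Real.rpow_le_rpow (norm_nonneg _) hfτ (by linarith)
          have hf6 : (a1 + d1v) ^ p ≤ a1 ^ p + p * (a1 + d1v) ^ (p - 1) * d1v :=
            aux_mvt_rpow ha1nn hd1nn hp.le
          have hExτT : Exτ ≤ Real.exp (K * T) :=
            Real.exp_le_exp.2 (mul_le_mul_of_nonneg_left (by linarith) hKpos.le)
          have hd1le1 : d1v ≤ 1 := by
            have h1 : d1v ≤ Real.exp (-(K * T)) * Real.exp (K * T) :=
              mul_le_mul hεle hExτT (Real.exp_pos _).le (Real.exp_pos _).le
            rwa [← Real.exp_add, neg_add_cancel, Real.exp_zero] at h1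
          have hbbM : a1 + d1v ≤ M + 1 :=
            add_le_add (hMh _ ⟨hxτ1, by linarith⟩) hd1le1
          have hf8 : (a1 + d1v) ^ (p - 1) ≤ (M + 1) ^ (p - 1) :=
            Real.rpow_le_rpow (by linarith) hbbM (by linarith)
          have hExτx : Exτ ≤ Ex :=
            Real.exp_le_exp.2 (mul_le_mul_of_nonneg_left (by linarith) hKpos.le)
          have hαx := hα x
          have hAx := hAα x ⟨hx0, hxT⟩
          have hΓx := hΓγ x ⟨hx0, hxT⟩
          have e1 : α x * f (x - τ) ^ p ≤ α x * (a1 ^ p + p * (M + 1) ^ (p - 1) * d1v) := by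
            have h12 := le_trans hf5 hf6
            have h3 : a1 ^ p + p * (a1 + d1v) ^ (p - 1) * d1v
                ≤ a1 ^ p + p * (M + 1) ^ (p - 1) * d1v := by
              have h4 : p * (a1 + d1v) ^ (p - 1) * d1v ≤ p * (M + 1) ^ (p - 1) * d1v :=
                mul_le_mul_of_nonneg_right
                  (mul_le_mul_of_nonneg_left hf8 (by linarith)) hd1nn
              linarith
            exact mul_le_mul_of_nonneg_left (le_trans h12 h3) hαx
          have e2 : α x * (p * (M + 1) ^ (p - 1) * d1v) ≤ Q * (ε * Ex) := by
            have hq : 0 ≤ p * (M + 1) ^ (p - 1) := by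
              have := Real.rpow_nonneg hM1.le (p - 1); positivity
            have h5 : p * (M + 1) ^ (p - 1) * d1v ≤ p * (M + 1) ^ (p - 1) * (ε * Ex) := by
              apply mul_le_mul_of_nonneg_left _ hq
              exact mul_le_mul_of_nonneg_left hExτx hε.le
            calc α x * (p * (M + 1) ^ (p - 1) * d1v)
                ≤ A * (p * (M + 1) ^ (p - 1) * (ε * Ex)) := by
                  apply mul_le_mul hAx h5 (by positivity) hAnn
              _ = Q * (ε * Ex) := by rw [hQ]; ring
          have e12 : α x * f (x - τ) ^ p ≤ α x * a1 ^ p + Q * (ε * Ex) := by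
            rw [mul_add] at e1
            linarith [e1, e2]
          have e3 : γ x * (ε * Ex) ≤ Γ * (ε * Ex) :=
            mul_le_mul_of_nonneg_right hΓx (by positivity)
          have hγf : γ x * f x = γ x * h x + γ x * (ε * Ex) := by rw [hfx]; simp only [hB]; ring
          have hh' := hheq x hx0
          have hKE : ε * (Ex * K) = Γ * (ε * Ex) + Q * (ε * Ex) + 1 * (ε * Ex) := by
            rw [hK]; ring
          simp only [hB']
          linarith [hR, e12, e3, hEposx]
        exact image_le_of_deriv_right_lt_deriv_boundary' hfc hfd hfa hBc hBd bound
          ⟨hsa.le, hsb⟩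
    -- choose n with T ≤ n τ
    obtain ⟨n, hn⟩ := exists_nat_ge (T / τ)
    have hnτ : T ≤ (n:ℝ) * τ := by
      rw [div_le_iff₀ hτ] at hn; linarith
    intro s hs1 hs2
    exact claim n s hs1 (le_min (le_trans hs2 hnτ) hs2)
  -- let ε → 0
  by_contra hcon
  push_neg at hcon
  set δ : ℝ := ‖u t0‖ - h t0 with hδ
  have hδpos : 0 < δ := by simp only [hδ]; linarith
  set ε1 : ℝ := min (Real.exp (-(K * T))) (δ / (2 * Real.exp (K * t0))) with hε1
  have hε1pos : 0 < ε1 := lt_min (Real.exp_pos _) (by positivity)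
  have hmain := main ε1 hε1pos (min_le_left _ _) t0 ht0 le_rfl
  have hb2 : ε1 * Real.exp (K * t0) ≤ δ / 2 := by
    have h1 : ε1 ≤ δ / (2 * Real.exp (K * t0)) := min_le_right _ _
    have h2 : (0:ℝ) < Real.exp (K * t0) := Real.exp_pos _
    calc ε1 * Real.exp (K * t0) ≤ δ / (2 * Real.exp (K * t0)) * Real.exp (K * t0) :=
          mul_le_mul_of_nonneg_right h1 h2.le
      _ = δ / 2 := by field_simp
  have : f t0 ≤ h t0 + δ / 2 := le_trans hmain (by linarith)
  simp only [hf, hδ] at this hδpos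
  linarith

/-- `ν(t) = exp(−∫₀ᵗ γ(ξ) dξ)`. -/
noncomputable def nu (γ : ℝ → ℝ) (t : ℝ) : ℝ := Real.exp (-∫ ξ in (0:ℝ)..t, γ ξ)

/-- `σ(t) = exp(−∫_{t−τ}^t γ(ξ) dξ)`. -/
noncomputable def sig (γ : ℝ → ℝ) (τ t : ℝ) : ℝ :=
  Real.exp (-∫ ξ in (t - τ)..t, γ ξ)

/-- Theorem 2.5 (Theorem 1), the estimate (27) for the solution `u`. -/
theorem stmt_8
    {H : Type*} [NormedAddCommGroup H] [InnerProductSpace ℂ H]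
    (τ p : ℝ) (hτ : 0 < τ) (hp : 1 < p)
    (γ α β : ℝ → ℝ)
    (hγc : Continuous γ) (hαc : Continuous α) (hβc : Continuous β)
    (hα : ∀ t, 0 ≤ α t) (hβ : ∀ t, 0 ≤ β t)
    (u : ℝ → H) (u' : ℝ → H)
    (huc : ContinuousOn u (Ici (-τ)))
    (hud : ∀ t, 0 ≤ t → HasDerivWithinAt u (u' t) (Ici (0:ℝ)) t)
    (hnd : ∀ t, 0 ≤ t → DifferentiableWithinAt ℝ (fun s => ‖u s‖) (Ici (0:ℝ)) t)
    (huineq : ∀ t, 0 ≤ t → (⟪u t, u' t⟫).re ≤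
      γ t * ‖u t‖ ^ 2 + α t * ‖u t‖ * ‖u (t - τ)‖ ^ p + β t * ‖u t‖)
    (h h' : ℝ → ℝ)
    (hh0 : ∀ t, -τ ≤ t → 0 ≤ h t)
    (hhc : ContinuousOn h (Ici (-τ)))
    (hhd : ∀ t, 0 ≤ t → HasDerivWithinAt h (h' t) (Ici (0:ℝ)) t)
    (hheq : ∀ t, 0 ≤ t → h' t = γ t * h t + α t * h (t - τ) ^ p + β t)
    (hinit : ∀ t, -τ ≤ t → t ≤ 0 → h t = ‖u t‖)
    (hτv : ℝ)
    (hτvdef : hτv = (‖u 0‖ + ∫ ξ in (0:ℝ)..τ,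
        (α ξ * nu γ ξ * ‖u (ξ - τ)‖ ^ p + β ξ * nu γ ξ)) / nu γ τ)
    (hαpos : ∀ t, τ ≤ t → 0 < α t)
    (I : ℝ)
    (hint : IntegrableOn (fun ξ => α ξ * sig γ τ ξ ^ p * nu γ ξ ^ (1 - p)) (Ici τ))
    (hI : I = ∫ ξ in Ici τ, α ξ * sig γ τ ξ ^ p * nu γ ξ ^ (1 - p))
    (ω : ℝ)
    (hω : IsLUB {x : ℝ | ∃ t, τ ≤ t ∧
        x = (β t / α t) ^ (1 / p) * Real.exp (-∫ ξ in (0:ℝ)..(t - τ), γ ξ)} ω)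
    (hωpos : 0 < ω)
    (hωlt : ω < ((p - 1) * I) ^ (-(1 / (p - 1))) - hτv * nu γ τ) :
    ∀ t, τ ≤ t →
      ‖u t‖ ≤ (1 / nu γ t) * (((hτv * nu γ τ + ω) ^ (1 - p)
          - (p - 1) * ∫ ξ in τ..t, α ξ * sig γ τ ξ ^ p * nu γ ξ ^ (1 - p))
            ^ (-(1 / (p - 1))) - ω) := by
  intro t ht
  have hp1 : (0:ℝ) < p - 1 := by linarith
  have ht0 : (0:ℝ) ≤ t := le_trans hτ.le ht
  -- primitive of γ
  set F : ℝ → ℝ := fun s => ∫ ξ in (0:ℝ)..s, γ ξ with hF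
  have hFd : ∀ s, HasDerivAt F (γ s) s := fun s =>
    (hγc.integral_hasStrictDerivAt 0 s).hasDerivAt
  have hFc : Continuous F := by
    have : Differentiable ℝ F := fun s => (hFd s).differentiableAt
    exact this.continuous
  have hνeq : ∀ s, nu γ s = Real.exp (-F s) := fun s => rfl
  have hνpos : ∀ s, 0 < nu γ s := fun s => Real.exp_pos _
  have hνd : ∀ s, HasDerivAt (nu γ) (-γ s * nu γ s) s := by
    intro s
    have h1 : HasDerivAt (fun s => Real.exp (-F s)) (Real.exp (-F s) * -γ s) s :=
      ((hFd s).neg).exp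
    have h2 : (nu γ) = fun s => Real.exp (-F s) := rfl
    rw [h2]
    simpa [mul_comm] using h1
  have hνc : Continuous (nu γ) := by
    have h2 : (nu γ) = fun s => Real.exp (-F s) := rfl
    rw [h2]; exact Real.continuous_exp.comp hFc.neg
  have hσeq : ∀ s, sig γ τ s = Real.exp (F (s - τ) - F s) := by
    intro s
    have h1 : (∫ ξ in (0:ℝ)..(s-τ), γ ξ) + ∫ ξ in (s-τ)..s, γ ξ = ∫ ξ in (0:ℝ)..s, γ ξ :=
      intervalIntegral.integral_add_adjacent_intervals (hγc.intervalIntegrable _ _)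
        (hγc.intervalIntegrable _ _)
    have h2 : ∫ ξ in (s-τ)..s, γ ξ = F s - F (s - τ) := by
      simp only [hF]; linarith
    unfold sig
    rw [h2]; ring_nf
  have hσpos : ∀ s, 0 < sig γ τ s := fun s => Real.exp_pos _
  have hσν : ∀ s, nu γ (s - τ) * sig γ τ s = nu γ s := by
    intro s
    rw [hσeq, hνeq, hνeq, ← Real.exp_add]
    ring_nf
  have hσc : Continuous (sig γ τ) := by
    have h2 : sig γ τ = fun s => Real.exp (F (s - τ) - F s) := funext hσeq
    rw [h2]
    exact Real.continuous_exp.comp ((hFc.comp (continuous_id.sub continuous_const)).sub hFc)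
  -- comparison
  have hcomp : ∀ s, -τ ≤ s → ‖u s‖ ≤ h s :=
    aux_comparison τ p hτ hp γ α β hγc hαc hα u u' huc hud hnd huineq h h' hh0 hhc hhd
      hheq hinit
  -- w = ν · h
  set w : ℝ → ℝ := fun s => nu γ s * h s with hw
  have hwd : ∀ s, 0 ≤ s →
      HasDerivWithinAt w (nu γ s * (α s * h (s - τ) ^ p + β s)) (Ici 0) s := by
    intro s hs
    have h1 := ((hνd s).hasDerivWithinAt.mul (hhd s hs))
    have h2 : -γ s * nu γ s * h s + nu γ s * h' s = nu γ s * (α s * h (s - τ) ^ p + β s) := by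
      rw [hheq s hs]; ring
    rwa [h2] at h1
  have hIci : Ici (0:ℝ) ⊆ Ici (-τ) := fun x hx => le_trans (by linarith : -τ ≤ (0:ℝ)) hx
  have hwc : ContinuousOn w (Ici (0:ℝ)) := (hνc.continuousOn).mul (hhc.mono hIci)
  have hwnn : ∀ s, 0 ≤ s → 0 ≤ w s := fun s hs =>
    mul_nonneg (hνpos s).le (hh0 s (by linarith))
  have hw'nn : ∀ s, 0 ≤ s → 0 ≤ nu γ s * (α s * h (s - τ) ^ p + β s) := fun s hs =>
    mul_nonneg (hνpos s).le (add_nonneg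
      (mul_nonneg (hα s) (Real.rpow_nonneg (hh0 _ (by linarith)) p)) (hβ s))
  have hwmono : MonotoneOn w (Ici (0:ℝ)) := by
    apply monotoneOn_of_deriv_nonneg (convex_Ici 0) hwc
    · intro x hx
      rw [interior_Ici] at hx
      exact ((hwd x hx.le).hasDerivAt (Ici_mem_nhds hx)).differentiableAt.differentiableWithinAt
    · intro x hx
      rw [interior_Ici] at hx
      rw [((hwd x hx.le).hasDerivAt (Ici_mem_nhds hx)).deriv]
      exact hw'nn x hx.le
  -- value at τ
  have hwτ : w τ = hτv * nu γ τ := by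
    have hmaps : ∀ x ∈ Icc (0:ℝ) τ, x - τ ∈ Ici (-τ) := fun x hx => by
      simp only [mem_Ici]; linarith [hx.1]
    have hcont : ContinuousOn (fun ξ => nu γ ξ * (α ξ * h (ξ - τ) ^ p + β ξ)) (Icc 0 τ) := by
      apply (hνc.continuousOn).mul
      apply ContinuousOn.add _ (hβc.continuousOn)
      apply (hαc.continuousOn).mul
      apply ContinuousOn.rpow_const
      · exact hhc.comp ((continuous_id.sub continuous_const).continuousOn) hmaps
      · intro x hx; right; linarith
    have hint2 : IntervalIntegrable (fun ξ => nu γ ξ * (α ξ * h (ξ - τ) ^ p + β ξ))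
        volume 0 τ := by
      apply ContinuousOn.intervalIntegrable; rwa [uIcc_of_le hτ.le]
    have hFTC := intervalIntegral.integral_eq_sub_of_hasDeriv_right_of_le hτ.le
      (hwc.mono (fun x hx => hx.1))
      (fun x hx => ((hwd x hx.1.le).mono (fun y (hy : x < y) => le_trans hx.1.le hy.le)))
      hint2
    have hw0 : w 0 = ‖u 0‖ := by
      have hν0 : nu γ 0 = 1 := by unfold nu; simp
      simp [hw, hν0, hinit 0 (by linarith) le_rfl]
    have hintcongr : (∫ ξ in (0:ℝ)..τ, nu γ ξ * (α ξ * h (ξ - τ) ^ p + β ξ))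
        = ∫ ξ in (0:ℝ)..τ, (α ξ * nu γ ξ * ‖u (ξ - τ)‖ ^ p + β ξ * nu γ ξ) := by
      apply intervalIntegral.integral_congr
      intro ξ hξ
      rw [uIcc_of_le hτ.le] at hξ
      show nu γ ξ * (α ξ * h (ξ - τ) ^ p + β ξ)
          = α ξ * nu γ ξ * ‖u (ξ - τ)‖ ^ p + β ξ * nu γ ξ
      rw [hinit (ξ - τ) (by linarith [hξ.1]) (by linarith [hξ.2])]
      ring
    have hwτval : w τ = ‖u 0‖ + ∫ ξ in (0:ℝ)..τ,
        (α ξ * nu γ ξ * ‖u (ξ - τ)‖ ^ p + β ξ * nu γ ξ) := by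
      rw [← hintcongr]; rw [hFTC, hw0]; ring
    rw [hτvdef, hwτval]
    rw [div_mul_cancel₀ _ (ne_of_gt (hνpos τ))]
  -- φ
  set φ : ℝ → ℝ := fun ξ => α ξ * sig γ τ ξ ^ p * nu γ ξ ^ (1 - p) with hφ
  have hφc : Continuous φ := by
    apply Continuous.mul
    apply Continuous.mul hαc
    · exact hσc.rpow_const (fun x => Or.inl (ne_of_gt (hσpos x)))
    · exact hνc.rpow_const (fun x => Or.inl (ne_of_gt (hνpos x)))
  have hφnn : ∀ ξ, 0 ≤ φ ξ := fun ξ =>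
    mul_nonneg (mul_nonneg (hα ξ) (Real.rpow_nonneg (hσpos ξ).le p))
      (Real.rpow_nonneg (hνpos ξ).le _)
  -- key inequality
  have hkey : ∀ s, τ ≤ s → nu γ s * (α s * h (s - τ) ^ p + β s) ≤ φ s * (w s + ω) ^ p := by
    intro s hs
    have hs0 : (0:ℝ) ≤ s := le_trans hτ.le hs
    have hsτ0 : (0:ℝ) ≤ s - τ := by linarith
    have hh1 : h (s - τ) = w (s - τ) * (sig γ τ s / nu γ s) := by
      have h3 : w (s - τ) * (sig γ τ s / nu γ s)
          = h (s - τ) * ((nu γ (s - τ) * sig γ τ s) / nu γ s) := by rw [hw]; ring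
      rw [h3, hσν s, div_self (ne_of_gt (hνpos s)), mul_one]
    have hwle : w (s - τ) ≤ w s := hwmono (mem_Ici.2 hsτ0) (mem_Ici.2 hs0) (by linarith)
    have hwp : w (s - τ) ^ p ≤ w s ^ p :=
      Real.rpow_le_rpow (hwnn _ hsτ0) hwle (by linarith)
    have hterm1 : nu γ s * (α s * h (s - τ) ^ p) ≤ φ s * w s ^ p := by
      rw [hh1, Real.mul_rpow (hwnn _ hsτ0) (div_nonneg (hσpos s).le (hνpos s).le),
        Real.div_rpow (hσpos s).le (hνpos s).le]
      have hν1p : nu γ s ^ (1 - p) = nu γ s / nu γ s ^ p := by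
        rw [Real.rpow_sub (hνpos s), Real.rpow_one]
      have hcoef : (0:ℝ) ≤ α s * sig γ τ s ^ p * (nu γ s / nu γ s ^ p) :=
        mul_nonneg (mul_nonneg (hα s) (Real.rpow_nonneg (hσpos s).le p))
          (div_nonneg (hνpos s).le (Real.rpow_nonneg (hνpos s).le p))
      calc nu γ s * (α s * (w (s - τ) ^ p * (sig γ τ s ^ p / nu γ s ^ p)))
          = (α s * sig γ τ s ^ p * (nu γ s / nu γ s ^ p)) * w (s - τ) ^ p := by ring
        _ ≤ (α s * sig γ τ s ^ p * (nu γ s / nu γ s ^ p)) * w s ^ p :=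
            mul_le_mul_of_nonneg_left hwp hcoef
        _ = φ s * w s ^ p := by simp only [hφ]; rw [hν1p]
    have hterm2 : nu γ s * β s ≤ φ s * ω ^ p := by
      have hmem : (β s / α s) ^ (1/p) * Real.exp (-∫ ξ in (0:ℝ)..(s - τ), γ ξ) ≤ ω :=
        hω.1 ⟨s, hs, rfl⟩
      have hexpν : Real.exp (-∫ ξ in (0:ℝ)..(s - τ), γ ξ) = nu γ (s - τ) := rfl
      rw [hexpν] at hmem
      have hβα : (0:ℝ) ≤ β s / α s := div_nonneg (hβ s) (hα s)
      have hLHSnn : (0:ℝ) ≤ (β s / α s) ^ (1/p) * nu γ (s - τ) :=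
        mul_nonneg (Real.rpow_nonneg hβα _) (hνpos _).le
      have hpow : ((β s / α s) ^ (1/p) * nu γ (s - τ)) ^ p ≤ ω ^ p :=
        Real.rpow_le_rpow hLHSnn hmem (by linarith)
      have hexpand : ((β s / α s) ^ (1/p) * nu γ (s - τ)) ^ p
          = (β s / α s) * nu γ (s - τ) ^ p := by
        rw [Real.mul_rpow (Real.rpow_nonneg hβα _) (hνpos _).le,
          ← Real.rpow_mul hβα, one_div_mul_cancel (by linarith : p ≠ 0), Real.rpow_one]
      have hναs : nu γ (s - τ) = nu γ s / sig γ τ s := by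
        rw [eq_div_iff (ne_of_gt (hσpos s))]; exact hσν s
      have hνν : nu γ s ^ (1 - p) * nu γ s ^ p = nu γ s := by
        rw [← Real.rpow_add (hνpos s)]
        have h9 : (1 - p) + p = 1 := by ring
        rw [h9, Real.rpow_one]
      have hφid : φ s * ((β s / α s) * nu γ (s - τ) ^ p) = nu γ s * β s := by
        rw [hναs, Real.div_rpow (hνpos s).le (hσpos s).le]
        simp only [hφ]
        have hαne : α s ≠ 0 := ne_of_gt (hαpos s hs)
        have hσpne : sig γ τ s ^ p ≠ 0 := ne_of_gt (Real.rpow_pos_of_pos (hσpos s) p)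
        field_simp
        linear_combination β s * hνν
      calc nu γ s * β s = φ s * ((β s / α s) * nu γ (s - τ) ^ p) := hφid.symm
        _ ≤ φ s * ω ^ p := by
            apply mul_le_mul_of_nonneg_left _ (hφnn s)
            rw [← hexpand]; exact hpow
    have hsum : w s ^ p + ω ^ p ≤ (w s + ω) ^ p :=
      aux_add_rpow_le (hwnn s hs0) hωpos.le hp.le
    have hφsum : φ s * (w s ^ p + ω ^ p) ≤ φ s * (w s + ω) ^ p :=
      mul_le_mul_of_nonneg_left hsum (hφnn s)
    calc nu γ s * (α s * h (s - τ) ^ p + β s)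
        = nu γ s * (α s * h (s - τ) ^ p) + nu γ s * β s := by ring
      _ ≤ φ s * w s ^ p + φ s * ω ^ p := add_le_add hterm1 hterm2
      _ = φ s * (w s ^ p + ω ^ p) := by ring
      _ ≤ φ s * (w s + ω) ^ p := hφsum
  -- z, P, ψ
  set z : ℝ → ℝ := fun s => w s + ω with hz
  have hzpos : ∀ s, 0 ≤ s → 0 < z s := fun s hs =>
    add_pos_of_nonneg_of_pos (hwnn s hs) hωpos
  set P : ℝ → ℝ := fun s => ∫ ξ in τ..s, φ ξ with hP
  have hPd : ∀ s, HasDerivAt P (φ s) s := fun s =>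
    (hφc.integral_hasStrictDerivAt τ s).hasDerivAt
  have hPc : Continuous P := by
    have : Differentiable ℝ P := fun s => (hPd s).differentiableAt
    exact this.continuous
  set ψ : ℝ → ℝ := fun s => z s ^ (1 - p) + (p - 1) * P s with hψ
  have hIciτ : Ici τ ⊆ Ici (0:ℝ) := fun x hx => le_trans hτ.le hx
  have hψc : ContinuousOn ψ (Ici τ) := by
    apply ContinuousOn.add
    · apply ContinuousOn.rpow_const
      · exact ((hwc.mono hIciτ).add continuousOn_const)
      · intro x hx
        exact Or.inl (ne_of_gt (hzpos x (hIciτ hx)))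
    · exact (continuous_const.mul hPc).continuousOn
  have hψd : ∀ x, τ < x → HasDerivAt ψ
      ((nu γ x * (α x * h (x - τ) ^ p + β x)) * (1 - p) * z x ^ (1 - p - 1)
        + (p - 1) * φ x) x := by
    intro x hx
    have hx0 : (0:ℝ) < x := lt_trans hτ hx
    have hzd : HasDerivAt z (nu γ x * (α x * h (x - τ) ^ p + β x)) x := by
      have := ((hwd x hx0.le).hasDerivAt (Ici_mem_nhds hx0))
      exact this.add_const ω
    have hzp : HasDerivAt (fun s => z s ^ (1 - p))
        ((nu γ x * (α x * h (x - τ) ^ p + β x)) * (1 - p) * z x ^ (1 - p - 1)) x :=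
      hzd.rpow_const (Or.inl (ne_of_gt (hzpos x hx0.le)))
    exact hzp.add ((hPd x).const_mul (p - 1))
  have hψmono : MonotoneOn ψ (Ici τ) := by
    apply monotoneOn_of_deriv_nonneg (convex_Ici τ) hψc
    · intro x hx
      rw [interior_Ici] at hx
      exact (hψd x hx).differentiableAt.differentiableWithinAt
    · intro x hx
      rw [interior_Ici] at hx
      rw [(hψd x hx).deriv]
      have hx0 : (0:ℝ) < x := lt_trans hτ hx
      set W : ℝ := nu γ x * (α x * h (x - τ) ^ p + β x) with hW
      have hzx := hzpos x hx0.le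
      have hzmp : (0:ℝ) < z x ^ (-p) := Real.rpow_pos_of_pos hzx _
      have hWle : W ≤ φ x * z x ^ p := hkey x hx.le
      have hprod : z x ^ p * z x ^ (-p) = 1 := by
        rw [← Real.rpow_add hzx]
        have h9 : p + -p = 0 := by ring
        rw [h9, Real.rpow_zero]
      have h1p : (1 - p - 1 : ℝ) = -p := by ring
      rw [h1p]
      have hWz : W * z x ^ (-p) ≤ φ x := by
        calc W * z x ^ (-p) ≤ (φ x * z x ^ p) * z x ^ (-p) :=
              mul_le_mul_of_nonneg_right hWle hzmp.le
          _ = φ x * (z x ^ p * z x ^ (-p)) := by ring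
          _ = φ x := by rw [hprod, mul_one]
      nlinarith [hWz, hp1]
  -- conclude
  have hψle := hψmono (self_mem_Ici) (mem_Ici.2 ht) ht
  have hPτ : P τ = 0 := by simp [hP]
  have hψτ : ψ τ = z τ ^ (1 - p) := by simp [hψ, hPτ]
  set c : ℝ := z τ ^ (1 - p) - (p - 1) * P t with hc
  have hczt : c ≤ z t ^ (1 - p) := by
    simp only [hψ] at hψle
    rw [hPτ] at hψle
    simp only [hc]; linarith
  -- P t ≤ I
  have hPle : P t ≤ I := by
    have h1 : P t = ∫ ξ in Ioc τ t, φ ξ := intervalIntegral.integral_of_le ht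
    rw [h1, hI]
    apply setIntegral_mono_set hint
      (Filter.Eventually.of_forall (fun x => hφnn x))
      (HasSubset.Subset.eventuallyLE (fun x hx => le_of_lt hx.1 : Ioc τ t ⊆ Ici τ))
  have hPnn : 0 ≤ P t := intervalIntegral.integral_nonneg ht (fun x _ => hφnn x)
  have hzτpos : 0 < z τ := hzpos τ hτ.le
  have hzτeq : z τ = hτv * nu γ τ + ω := by simp only [hz]; rw [hwτ]
  have hzτlt : z τ < ((p - 1) * I) ^ (-(1 / (p - 1))) := by rw [hzτeq]; linarith
  have hInn : 0 ≤ I := by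
    rw [hI]; exact setIntegral_nonneg measurableSet_Ici (fun x _ => hφnn x)
  have hIpos : 0 < (p - 1) * I := by
    rcases lt_or_eq_of_le (mul_nonneg hp1.le hInn) with h1 | h1
    · exact h1
    · exfalso
      rw [← h1, Real.zero_rpow (by
          simp only [neg_ne_zero]
          exact one_div_ne_zero (ne_of_gt hp1))] at hzτlt
      linarith
  have hne : p - 1 ≠ 0 := ne_of_gt hp1
  have hexp1 : -(1 / (p - 1)) * (1 - p) = 1 := by field_simp; ring
  have hexp2 : (1 - p) * -(1 / (p - 1)) = 1 := by field_simp; ring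
  have hpow1 : (((p - 1) * I) ^ (-(1 / (p - 1)))) ^ (1 - p) = (p - 1) * I := by
    rw [← Real.rpow_mul hIpos.le, hexp1, Real.rpow_one]
  have hcgt : (p - 1) * I < z τ ^ (1 - p) := by
    have h2 := Real.rpow_lt_rpow_of_neg hzτpos hzτlt (by linarith : (1:ℝ) - p < 0)
    rwa [hpow1] at h2
  have hcpos : 0 < c := by
    have h3 : (p - 1) * P t ≤ (p - 1) * I := mul_le_mul_of_nonneg_left hPle hp1.le
    simp only [hc]; linarith
  have hzt : z t ≤ c ^ (-(1 / (p - 1))) := by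
    have he : -(1 / (p - 1)) ≤ 0 := by
      rw [neg_nonpos]; positivity
    have h1 := Real.rpow_le_rpow_of_nonpos hcpos hczt he
    have h2 : (z t ^ (1 - p)) ^ (-(1 / (p - 1))) = z t := by
      rw [← Real.rpow_mul (hzpos t ht0).le, hexp2, Real.rpow_one]
    rwa [h2] at h1
  -- conclusion
  have hht : h t = w t / nu γ t := by
    rw [eq_div_iff (ne_of_gt (hνpos t))]
    show h t * nu γ t = nu γ t * h t
    ring
  have hwt : w t ≤ c ^ (-(1 / (p - 1))) - ω := by
    have h1 : z t = w t + ω := rfl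
    rw [h1] at hzt; linarith
  have hfinal : ‖u t‖ ≤ (1 / nu γ t) * (c ^ (-(1 / (p - 1))) - ω) := by
    calc ‖u t‖ ≤ h t := hcomp t (by linarith)
      _ = w t / nu γ t := hht
      _ ≤ (c ^ (-(1 / (p - 1))) - ω) / nu γ t := (div_le_div_iff_of_pos_right (hνpos t)).2 hwt
      _ = (1 / nu γ t) * (c ^ (-(1 / (p - 1))) - ω) := by ring
  have hgoal' : (hτv * nu γ τ + ω) ^ (1 - p)
      - (p - 1) * (∫ ξ in τ..t, φ ξ) = c := by
    rw [hc, ← hzτeq]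
  rw [hgoal']
  exact hfinal
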